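/- For a symmetric k×k matrix Θ that is not positive definite and an integer t with 0 < t ≤ k, the supremum over positive semidefinite k×k matrices W of rank at least t of Σ_{ℓ=1}^t log(λ_ℓ(W)) − Trace(Θ W) equals +∞. -/

import Mathlib

/-- `descEig W i` is the `(i+1)`-th greatest eigenvalue of the real symmetric matrix `W`
(junk value `0` if `W` is not symmetric). -/
noncomputable def descEig {k : ℕ} (W : Matrix (Fin k) (Fin k) ℝ) : Fin k → ℝ :=
  fun i => if h : W.IsHermitian then (h.eigenvalues ∘ Tuple.sort h.eigenvalues) i.rev else 0

open Matrix in
private lemma vmv_mulVec {k : ℕ} (x y : Fin k → ℝ) :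
    (vecMulVec x x) *ᵥ y = (x ⬝ᵥ y) • x := by
  ext i
  simp only [vecMulVec_apply, mulVec, dotProduct, Pi.smul_apply, smul_eq_mul, Finset.sum_mul,
    Finset.mul_sum]
  exact Finset.sum_congr rfl fun j _ => by ring

open Matrix in
private lemma vmv_herm {k : ℕ} (x : Fin k → ℝ) (s : ℝ) :
    (1 + s • vecMulVec x x).IsHermitian := by
  unfold Matrix.IsHermitian
  ext i j
  simp only [conjTranspose_apply, Matrix.add_apply, Matrix.smul_apply, vecMulVec_apply,
    star_trivial, smul_eq_mul, Matrix.one_apply]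
  by_cases h : i = j <;> simp [h, eq_comm, mul_comm]

open Matrix in
private lemma vmv_quad {k : ℕ} (x y : Fin k → ℝ) (s : ℝ) :
    y ⬝ᵥ ((1 + s • vecMulVec x x) *ᵥ y) = y ⬝ᵥ y + s * (x ⬝ᵥ y) * (x ⬝ᵥ y) := by
  rw [add_mulVec, one_mulVec, smul_mulVec, vmv_mulVec, dotProduct_add]
  rw [dotProduct_smul, smul_eq_mul, dotProduct_smul, smul_eq_mul, dotProduct_comm y x]
  ring

open Matrix in
private lemma dot_self_pos {k : ℕ} {x : Fin k → ℝ} (hx : x ≠ 0) : 0 < x ⬝ᵥ x := by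
  obtain ⟨j, hj⟩ := Function.ne_iff.mp hx
  have hpos : (0:ℝ) < x j * x j := by
    rcases (mul_self_nonneg (x j)).lt_or_eq with h | h
    · exact h
    · exact absurd (by nlinarith : x j = 0) hj
  exact Finset.sum_pos' (fun l _ => mul_self_nonneg _) ⟨j, Finset.mem_univ j, hpos⟩

open Matrix in
private lemma eig_ge_one {k : ℕ} {W : Matrix (Fin k) (Fin k) ℝ} (hW : W.IsHermitian)
    (hq : ∀ y : Fin k → ℝ, y ⬝ᵥ y ≤ y ⬝ᵥ (W *ᵥ y)) (i : Fin k) :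
    1 ≤ hW.eigenvalues i := by
  set u : Fin k → ℝ := ⇑(hW.eigenvectorBasis i) with hu
  have hmv : W *ᵥ u = hW.eigenvalues i • u := hW.mulVec_eigenvectorBasis i
  have hne : hW.eigenvectorBasis i ≠ 0 := hW.eigenvectorBasis.toBasis.ne_zero i
  have hune : u ≠ 0 := fun h0 => hne (by ext j; exact congrFun h0 j)
  have hd : 0 < u ⬝ᵥ u := dot_self_pos hune
  have h1 : u ⬝ᵥ (W *ᵥ u) = hW.eigenvalues i * (u ⬝ᵥ u) := by
    rw [hmv, dotProduct_smul, smul_eq_mul]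
  have h2 := hq u
  rw [h1] at h2
  nlinarith

open Matrix in
private lemma sum_log_descEig_ge {k t : ℕ} (ht : 0 < t) (htk : t ≤ k)
    (W : Matrix (Fin k) (Fin k) ℝ)
    (hW : W.IsHermitian) (h1 : ∀ i, 1 ≤ hW.eigenvalues i) :
    Real.log W.det / k ≤ ∑ i : Fin k, if (i : ℕ) < t then Real.log (descEig W i) else 0 := by
  have hk : 0 < k := lt_of_lt_of_le ht htk
  set σ := Tuple.sort hW.eigenvalues with hσ
  set g : Fin k → ℝ := hW.eigenvalues ∘ σ with hg
  have hmono : Monotone g := Tuple.monotone_sort hW.eigenvalues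
  have hg1 : ∀ j, 1 ≤ g j := fun j => h1 (σ j)
  have hde : ∀ i : Fin k, descEig W i = g i.rev := by
    intro i; simp only [descEig, dif_pos hW]; rfl
  set i0 : Fin k := ⟨0, hk⟩ with hi0
  have hrev : ∀ j : Fin k, j ≤ i0.rev := by
    intro j
    have hj := j.isLt
    rw [Fin.le_def, Fin.val_rev]
    show (j:ℕ) ≤ k - (0+1)
    omega
  have hdet : W.det = ∏ j, hW.eigenvalues j := by
    have := hW.det_eq_prod_eigenvalues
    simpa using this
  have hlogdet : Real.log W.det = ∑ j, Real.log (g j) := by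
    rw [hdet, Real.log_prod (fun j _ => by have := h1 j; positivity)]
    exact (Equiv.sum_comp σ (fun j => Real.log (hW.eigenvalues j))).symm
  have hle : ∀ j : Fin k, Real.log (g j) ≤ Real.log (g i0.rev) := fun j =>
    Real.log_le_log (by linarith [hg1 j]) (hmono (hrev j))
  have hsumle : Real.log W.det ≤ k * Real.log (g i0.rev) := by
    rw [hlogdet]
    calc ∑ j, Real.log (g j) ≤ ∑ _j : Fin k, Real.log (g i0.rev) :=
          Finset.sum_le_sum fun j _ => hle j
      _ = k * Real.log (g i0.rev) := by simp [mul_comm]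
  have hdiv : Real.log W.det / k ≤ Real.log (g i0.rev) := by
    rw [div_le_iff₀ (by positivity : (0:ℝ) < (k:ℝ))]
    linarith
  refine hdiv.trans ?_
  have heq : Real.log (g i0.rev) = if (i0 : ℕ) < t then Real.log (descEig W i0) else 0 := by
    rw [if_pos (by simpa using ht), hde]
  rw [heq]
  exact Finset.single_le_sum (f := fun i : Fin k => if (i:ℕ) < t then Real.log (descEig W i) else 0)
    (fun i _ => by
      split
      · rw [hde]; exact Real.log_nonneg (hg1 _)
      · exact le_refl 0) (Finset.mem_univ i0)

open Matrix in
private lemma trace_mul_vmv {k : ℕ} (Θ : Matrix (Fin k) (Fin k) ℝ) (x : Fin k → ℝ) :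
    (Θ * vecMulVec x x).trace = x ⬝ᵥ (Θ *ᵥ x) := by
  simp only [trace, diag_apply, Matrix.mul_apply, vecMulVec_apply, dotProduct, mulVec,
    Finset.mul_sum]
  exact Finset.sum_congr rfl fun i _ => Finset.sum_congr rfl fun j _ => by ring

open Matrix in
private lemma det_one_add_smul_vmv {k : ℕ} (x : Fin k → ℝ) (s : ℝ) :
    (1 + s • vecMulVec x x).det = 1 + s * (x ⬝ᵥ x) := by
  have h : s • vecMulVec x x = Matrix.replicateCol Unit (s • x) * Matrix.replicateRow Unit x := by
    rw [← vecMulVec_eq]; ext i j; simp [vecMulVec_apply]; ring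
  rw [h, Matrix.det_one_add_replicateCol_mul_replicateRow]
  simp only [dotProduct, Pi.smul_apply, smul_eq_mul, Finset.mul_sum]
  congr 1
  exact Finset.sum_congr rfl fun i _ => by ring

/-- For a symmetric `Θ` that is not positive definite and `0 < t ≤ k`, the supremum over
positive semidefinite `W` with `rank W ≥ t` of `∑_{ℓ=1}^t log λ_ℓ(W) − Trace(Θ W)` is
`+∞`. -/
theorem stmt_4 (k t : ℕ) (ht : 0 < t) (htk : t ≤ k)
    (Θ : Matrix (Fin k) (Fin k) ℝ) (hsym : Θ.IsHermitian) (hnpd : ¬ Θ.PosDef) :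
    ∀ M : ℝ, ∃ W : Matrix (Fin k) (Fin k) ℝ, W.PosSemidef ∧ t ≤ W.rank ∧
      M < (∑ i : Fin k, if (i : ℕ) < t then Real.log (descEig W i) else 0)
            - (Θ * W).trace := by
  intro M
  -- extract a nonzero vector with nonpositive quadratic form
  open Matrix in
  have hx : ∃ x : Fin k → ℝ, x ≠ 0 ∧ x ⬝ᵥ (Θ *ᵥ x) ≤ 0 := by
    by_contra h
    push_neg at h
    exact hnpd (Matrix.PosDef.of_dotProduct_mulVec_pos hsym fun x hx0 => by
      rw [star_trivial]; exact h x hx0)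
  obtain ⟨x, hx0, hxq⟩ := hx
  have hn2 : 0 < x ⬝ᵥ x := dot_self_pos hx0
  set E : ℝ := Real.exp (k * (M + Θ.trace + 1)) with hE
  have hEpos : 0 < E := Real.exp_pos _
  set s : ℝ := E / (x ⬝ᵥ x) with hs
  have hspos : 0 < s := div_pos hEpos hn2
  set W : Matrix (Fin k) (Fin k) ℝ := 1 + s • Matrix.vecMulVec x x with hWdef
  have hW : W.IsHermitian := vmv_herm x s
  have hquad : ∀ y : Fin k → ℝ, y ⬝ᵥ (W *ᵥ y) = y ⬝ᵥ y + s * (x ⬝ᵥ y) * (x ⬝ᵥ y) :=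
    fun y => vmv_quad x y s
  have hq : ∀ y : Fin k → ℝ, y ⬝ᵥ y ≤ y ⬝ᵥ (W *ᵥ y) := by
    intro y
    rw [hquad y]
    nlinarith [mul_self_nonneg (x ⬝ᵥ y), hspos.le]
  have hpsd : W.PosSemidef := by
    refine Matrix.PosSemidef.of_dotProduct_mulVec_nonneg hW fun y => ?_
    rw [star_trivial]
    have h0 : (0:ℝ) ≤ y ⬝ᵥ y := Finset.sum_nonneg fun i _ => mul_self_nonneg _
    exact h0.trans (hq y)
  -- determinant
  have hdet : W.det = 1 + E := by
    rw [hWdef, det_one_add_smul_vmv, hs, div_mul_cancel₀ _ (ne_of_gt hn2)]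
  have hdetpos : 0 < W.det := by rw [hdet]; linarith
  -- rank
  have hrank : t ≤ W.rank := by
    have hunit : IsUnit W := by
      rw [Matrix.isUnit_iff_isUnit_det, isUnit_iff_ne_zero]
      exact ne_of_gt hdetpos
    rw [Matrix.rank_of_isUnit W hunit, Fintype.card_fin]
    exact htk
  -- eigenvalues at least 1
  have h1 : ∀ i, 1 ≤ hW.eigenvalues i := eig_ge_one hW hq
  -- trace bound
  have htr : (Θ * W).trace ≤ Θ.trace := by
    have : Θ * W = Θ + s • (Θ * Matrix.vecMulVec x x) := by
      rw [hWdef, Matrix.mul_add, Matrix.mul_one, Matrix.mul_smul]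
    rw [this, Matrix.trace_add, Matrix.trace_smul, trace_mul_vmv, smul_eq_mul]
    nlinarith [hspos.le]
  -- log det lower bound
  have hlog : k * (M + Θ.trace + 1) < Real.log W.det := by
    rw [hdet]
    calc (k:ℝ) * (M + Θ.trace + 1) = Real.log E := (Real.log_exp _).symm
      _ < Real.log (1 + E) := Real.log_lt_log hEpos (by linarith)
  have hk0 : (0:ℝ) < k := by
    exact_mod_cast lt_of_lt_of_le ht htk
  have hlogdiv : M + Θ.trace + 1 < Real.log W.det / k := by
    rw [lt_div_iff₀ hk0]
    linarith [hlog]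
  have hsum := sum_log_descEig_ge ht htk W hW h1
  exact ⟨W, hpsd, hrank, by linarith⟩
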